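/- Let n ≥ 2 and let 1 ≤ d_1 ≤ d_2 ≤ … ≤ d_n be integers. If d_n ≤ d_1 + … + d_{n-1} + 1, then the polynomial ∏_{i=1}^n f_{d_i} is strictly unimodal. -/

import Mathlib

open Polynomial

/-- `fpoly d` is the polynomial `f_d = 1 + t + t^2 + ⋯ + t^d`. -/
noncomputable def fpoly (d : ℕ) : Polynomial ℝ :=
  ∑ i ∈ Finset.range (d + 1), Polynomial.X ^ i

/-- A sequence `a_0, …, a_d` is strictly unimodal if, for `d = 2m`,
`a_0 < a_1 < ⋯ < a_m > a_{m+1} > ⋯ > a_{2m}`, and for `d = 2m+1`,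
`a_0 < a_1 < ⋯ < a_m = a_{m+1} > a_{m+2} > ⋯ > a_{2m+1}`. -/
def StrictlyUnimodalSeq (d : ℕ) (a : ℕ → ℝ) : Prop :=
  (∀ i, i < d / 2 → a i < a (i + 1)) ∧
  (Odd d → a (d / 2) = a (d / 2 + 1)) ∧
  (∀ i, (d + 1) / 2 ≤ i → i < d → a (i + 1) < a i)

/-- The sequence `a` strictly increases on `[0, e]`, is constant on `[e, p]`,
and strictly decreases on `[p, D]`. -/
def IncConstDec (a : ℕ → ℝ) (e p D : ℕ) : Prop :=
  (∀ i, i < e → a i < a (i + 1)) ∧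
  (∀ i, e ≤ i → i < p → a i = a (i + 1)) ∧
  (∀ i, p ≤ i → i < D → a (i + 1) < a i)


open Finset

lemma fpoly_coeff (d j : ℕ) : (fpoly d).coeff j = if j ≤ d then 1 else 0 := by
  rw [fpoly, finset_sum_coeff]
  simp only [coeff_X_pow]
  rw [Finset.sum_ite_eq (Finset.range (d+1)) j (fun _ => (1:ℝ))]
  simp [Nat.lt_succ_iff]

lemma fpoly_natDegree (d : ℕ) : (fpoly d).natDegree = d := by
  apply le_antisymm
  · apply Polynomial.natDegree_le_iff_coeff_eq_zero.mpr
    intro i hi; rw [fpoly_coeff]; simp; omega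
  · apply Polynomial.le_natDegree_of_ne_zero
    rw [fpoly_coeff]; simp

lemma fpoly_ne_zero (d : ℕ) : fpoly d ≠ 0 := by
  intro h
  have := fpoly_coeff d 0
  rw [h] at this; simp at this

lemma fpoly_reverse (d : ℕ) : (fpoly d).reverse = fpoly d := by
  ext n
  rw [Polynomial.coeff_reverse, fpoly_natDegree]
  by_cases h : n ≤ d
  · rw [Polynomial.revAt_le h, fpoly_coeff, fpoly_coeff]
    simp [h, Nat.sub_le]
  · change (fpoly d).coeff (if n ≤ d then d - n else n) = _
    simp only [if_neg h]

lemma fpoly_mul_sub (A : Polynomial ℝ) (d : ℕ) :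
    A * fpoly d * (X - 1) = A * X ^ (d + 1) - A := by
  rw [mul_assoc, fpoly, geom_sum_mul]
  ring

lemma coeff_step (A : Polynomial ℝ) (d k : ℕ) :
    (A * fpoly d).coeff k - (A * fpoly d).coeff (k + 1)
      = (if d ≤ k then A.coeff (k - d) else 0) - A.coeff (k + 1) := by
  have h := congrArg (fun p => Polynomial.coeff p (k+1)) (fpoly_mul_sub A d)
  simp only [mul_sub, mul_one, Polynomial.coeff_sub, Polynomial.coeff_mul_X,
    Polynomial.coeff_mul_X_pow'] at h
  rw [h, Nat.succ_sub_succ]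
  congr 1
  simp [Nat.succ_le_succ_iff]

def Good (A : Polynomial ℝ) (e D : ℕ) : Prop :=
  (∀ i, i ≤ D → 0 < A.coeff i) ∧
  (∀ i, D < i → A.coeff i = 0) ∧
  (∀ i, i ≤ D → A.coeff i = A.coeff (D - i)) ∧
  2 * e ≤ D ∧
  (∀ i, i < e → A.coeff i < A.coeff (i+1)) ∧
  (∀ i, e ≤ i → i < D - e → A.coeff i = A.coeff (i+1))

section helpers
variable {A : Polynomial ℝ} {e D : ℕ}

lemma good_lt (hG : Good A e D) : ∀ i j, i < j → j ≤ e → A.coeff i < A.coeff j := by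
  intro i j hij hje
  induction j, hij using Nat.le_induction with
  | base => exact hG.2.2.2.2.1 i (by omega)
  | succ j hj ih =>
    exact lt_trans (ih (by omega)) (hG.2.2.2.2.1 j (by omega))

lemma good_const (hG : Good A e D) : ∀ i j, e ≤ i → i ≤ j → j ≤ D - e → A.coeff i = A.coeff j := by
  intro i j hei hij hje
  induction j, hij using Nat.le_induction with
  | base => rfl
  | succ j hj ih =>
    exact (ih (by omega)).trans (hG.2.2.2.2.2 j (by omega) (by omega))

lemma good_val (hG : Good A e D) : ∀ i, i ≤ D → A.coeff i = A.coeff (min e (min i (D - i))) := by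
  have h1 : ∀ i, 2 * i ≤ D → A.coeff i = A.coeff (min e i) := by
    intro i hi
    rcases le_or_gt i e with hie | hie
    · rw [min_eq_right hie]
    · rw [min_eq_left hie.le]
      exact (good_const hG e i le_rfl hie.le (by omega)).symm
  intro i hiD
  rcases le_or_gt (2*i) D with hi | hi
  · rw [min_eq_left (show i ≤ D - i by omega), h1 i hi]
  · have hsym := hG.2.2.1 i hiD
    rw [hsym, h1 (D - i) (by omega)]
    congr 1
    omega

lemma good_lt' (hG : Good A e D) {i j : ℕ} (hi : i ≤ D) (hj : j ≤ D)
    (hm : min e (min i (D - i)) < min e (min j (D - j))) :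
    A.coeff i < A.coeff j := by
  rw [good_val hG i hi, good_val hG j hj]
  exact good_lt hG _ _ hm (by omega)

end helpers

lemma good_step {A : Polynomial ℝ} {e D : ℕ} (hG : Good A e D) (d : ℕ) (hd : 1 ≤ d) :
    Good (A * fpoly d) (min (e + d) (min ((D + d)/2) D)) (D + d) := by
  obtain ⟨hpos, hzero, hsym, hee, hinc, hconst⟩ := hG
  have hG' : Good A e D := ⟨hpos, hzero, hsym, hee, hinc, hconst⟩
  have hAne : A ≠ 0 := fun h => by
    have := hpos 0 (Nat.zero_le D); rw [h] at this; simp at this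
  have hAdeg : A.natDegree = D := by
    apply le_antisymm
    · exact Polynomial.natDegree_le_iff_coeff_eq_zero.mpr (fun i hi => hzero i hi)
    · exact Polynomial.le_natDegree_of_ne_zero (ne_of_gt (hpos D le_rfl))
  have hArev : A.reverse = A := by
    ext n
    rw [Polynomial.coeff_reverse, hAdeg]
    by_cases h : n ≤ D
    · rw [Polynomial.revAt_le h]
      exact (hsym n h).symm
    · change A.coeff (if n ≤ D then D - n else n) = _
      rw [if_neg h]
  have hBdeg : (A * fpoly d).natDegree = D + d := by
    rw [Polynomial.natDegree_mul hAne (fpoly_ne_zero d), hAdeg, fpoly_natDegree]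
  have bdiff : ∀ k, (A * fpoly d).coeff (k+1) = (A * fpoly d).coeff k +
      (A.coeff (k+1) - (if d ≤ k then A.coeff (k - d) else 0)) := by
    intro k
    have h := coeff_step A d k
    linarith
  have bz : ∀ i, D + d < i → (A * fpoly d).coeff i = 0 := by
    intro i hi
    apply Polynomial.coeff_eq_zero_of_natDegree_lt
    rw [hBdeg]; omega
  have bsym : ∀ i, i ≤ D + d → (A * fpoly d).coeff i = (A * fpoly d).coeff (D + d - i) := by
    intro i hi
    have hBrev : (A * fpoly d).reverse = A * fpoly d := by
      rw [Polynomial.reverse_mul_of_domain, hArev, fpoly_reverse]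
    conv_lhs => rw [← hBrev]
    rw [Polynomial.coeff_reverse, hBdeg, Polynomial.revAt_le hi]
  have anneg : ∀ i, 0 ≤ A.coeff i := by
    intro i; rcases le_or_gt i D with h|h
    · exact (hpos i h).le
    · rw [hzero i h]
  have bsum : ∀ k, (A * fpoly d).coeff k
      = ∑ j ∈ range (d+1), if j ≤ k then A.coeff (k - j) else 0 := by
    intro k
    rw [fpoly, Finset.mul_sum, Polynomial.finset_sum_coeff]
    exact Finset.sum_congr rfl fun j _ => Polynomial.coeff_mul_X_pow' A j k
  have bpos : ∀ i, i ≤ D + d → 0 < (A * fpoly d).coeff i := by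
    intro i hi
    rw [bsum]
    apply Finset.sum_pos'
    · intro j _
      split
      · exact anneg _
      · exact le_refl 0
    · rcases le_or_gt i D with h|h
      · exact ⟨0, Finset.mem_range.mpr (by omega), by simpa using hpos i h⟩
      · refine ⟨i - D, Finset.mem_range.mpr (by omega), ?_⟩
        rw [if_pos (by omega), show i - (i - D) = D by omega]
        exact hpos D le_rfl
  refine ⟨bpos, bz, bsym, by omega, ?_, ?_⟩
  · intro k hk
    rw [bdiff k]
    have hk1 : k + 1 ≤ D := by omega
    have hstep : (if d ≤ k then A.coeff (k - d) else 0) < A.coeff (k+1) := by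
      split
      · next hdk => exact good_lt' hG' (by omega) hk1 (by omega)
      · exact hpos (k+1) hk1
    linarith
  · intro k hke hkD
    rw [bdiff k]
    have hstep : (if d ≤ k then A.coeff (k - d) else 0) = A.coeff (k+1) := by
      split
      · next hdk =>
        by_cases hc1 : e + d ≤ (D + d)/2
        · exact good_const hG' (k - d) (k + 1) (by omega) (by omega) (by omega)
        · by_cases hc2 : (D + d)/2 ≤ D
          · have hud : k + 1 ≤ D ∧ k - d = D - (k+1) := by omega
            rw [hud.2]
            exact (hsym (k+1) hud.1).symm
          · exfalso; omega
      · next hdk =>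
        exact (hzero (k+1) (by omega)).symm
    linarith

lemma good_fpoly (d : ℕ) : Good (fpoly d) 0 d := by
  refine ⟨?_, ?_, ?_, by omega, ?_, ?_⟩
  · intro i hi; rw [fpoly_coeff, if_pos hi]; norm_num
  · intro i hi; rw [fpoly_coeff, if_neg (by omega)]
  · intro i hi; rw [fpoly_coeff, fpoly_coeff, if_pos hi, if_pos (by omega)]
  · intro i hi; omega
  · intro i hi0 hi; rw [fpoly_coeff, fpoly_coeff, if_pos (by omega), if_pos (by omega)]

lemma good_unimodal {A : Polynomial ℝ} {D : ℕ} (hG : Good A (D/2) D) :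
    StrictlyUnimodalSeq D A.coeff := by
  obtain ⟨hpos, hzero, hsym, hee, hinc, hconst⟩ := hG
  refine ⟨hinc, ?_, ?_⟩
  · intro hodd
    obtain ⟨m, hm⟩ := hodd
    exact hconst (D/2) le_rfl (by omega)
  · intro i hi1 hi2
    have h1 : A.coeff (i+1) = A.coeff (D - (i+1)) := hsym (i+1) (by omega)
    have h2 : A.coeff i = A.coeff (D - i) := hsym i (by omega)
    rw [h1, h2]
    have h3 : D - (i+1) < D/2 := by omega
    have h4 := hinc (D - (i+1)) h3
    rwa [show D - (i+1) + 1 = D - i by omega] at h4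


/-- If `n ≥ 2`, `1 ≤ d_1 ≤ ⋯ ≤ d_n` and `d_n ≤ d_1 + ⋯ + d_{n-1} + 1`, then
`∏_{i=1}^n f_{d_i}` is strictly unimodal. -/
theorem prod_fpoly_strictlyUnimodal (n : ℕ) (hn : 2 ≤ n) (d : ℕ → ℕ)
    (hd1 : ∀ i < n, 1 ≤ d i) (hmono : ∀ i j, i ≤ j → j < n → d i ≤ d j)
    (h : d (n - 1) ≤ (∑ i ∈ Finset.range (n - 1), d i) + 1) :
    StrictlyUnimodalSeq (∑ i ∈ Finset.range n, d i)
      ((∏ i ∈ Finset.range n, fpoly (d i)).coeff) := by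
  have key : ∀ m, 2 ≤ m → m ≤ n →
      Good (∏ i ∈ Finset.range m, fpoly (d i))
        (min ((∑ i ∈ Finset.range m, d i)/2) ((∑ i ∈ Finset.range m, d i) - d (m-1)))
        (∑ i ∈ Finset.range m, d i) := by
    intro m hm
    induction m, hm using Nat.le_induction with
    | base =>
      intro hn2
      have h0 : (∏ i ∈ Finset.range 2, fpoly (d i)) = fpoly (d 0) * fpoly (d 1) := by
        rw [Finset.prod_range_succ, Finset.prod_range_one]
      have hs : (∑ i ∈ Finset.range 2, d i) = d 0 + d 1 := by
        rw [Finset.sum_range_succ, Finset.sum_range_one]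
      rw [h0, hs]
      have hstep := good_step (good_fpoly (d 0)) (d 1) (hd1 1 (by omega))
      have h01 : d 0 ≤ d 1 := hmono 0 1 (by omega) (by omega)
      have h10 : 1 ≤ d 0 := hd1 0 (by omega)
      have heq : min (0 + d 1) (min ((d 0 + d 1)/2) (d 0))
          = min ((d 0 + d 1)/2) (d 0 + d 1 - d 1) := by omega
      rwa [heq] at hstep
    | succ m hm ih =>
      intro hmn
      have ihm := ih (by omega)
      rw [Finset.prod_range_succ, Finset.sum_range_succ]
      have hdm : 1 ≤ d m := hd1 m (by omega)
      have hstep := good_step ihm (d m) hdm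
      have hle : d (m-1) ≤ d m := hmono (m-1) m (by omega) (by omega)
      have hsummand : d (m-1) ≤ ∑ i ∈ Finset.range m, d i :=
        Finset.single_le_sum (fun i _ => Nat.zero_le (d i)) (Finset.mem_range.mpr (by omega))
      have heq : min (min ((∑ i ∈ Finset.range m, d i)/2) ((∑ i ∈ Finset.range m, d i) - d (m-1)) + d m)
            (min (((∑ i ∈ Finset.range m, d i) + d m)/2) (∑ i ∈ Finset.range m, d i))
          = min (((∑ i ∈ Finset.range m, d i) + d m)/2)
            ((∑ i ∈ Finset.range m, d i) + d m - d (m + 1 - 1)) := by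
        simp only [Nat.add_sub_cancel]
        omega
      rwa [heq] at hstep
  have hG := key n hn le_rfl
  have hsummand : d (n-1) ≤ ∑ i ∈ Finset.range n, d i :=
    Finset.single_le_sum (fun i _ => Nat.zero_le (d i)) (Finset.mem_range.mpr (by omega))
  have hS : (∑ i ∈ Finset.range n, d i) = (∑ i ∈ Finset.range (n-1), d i) + d (n-1) := by
    conv_lhs => rw [show n = (n-1)+1 by omega, Finset.sum_range_succ]
  have he : min ((∑ i ∈ Finset.range n, d i)/2) ((∑ i ∈ Finset.range n, d i) - d (n-1))
      = (∑ i ∈ Finset.range n, d i)/2 := by omega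
  rw [he] at hG
  exact good_unimodal hG
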